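/- Let L : ℝ^p → ℝ be convex differentiable, μ > 0, and let x̂ minimize L(x) + (μ/2)Ω_excl(x)² with support 𝒥 = supp(x̂). Then for every group G with G ∩ 𝒥 = ∅, the gradient vanishes on G: [∇L(x̂)]_G = 0. -/

import Mathlib

/-- The exclusive group sparsity norm on `ℝ^p`; groups are the fibers of `g`. -/
noncomputable def OmegaExcl {p k : ℕ} (g : Fin p → Fin k)
    (x : EuclideanSpace ℝ (Fin p)) : ℝ :=
  Real.sqrt (∑ j : Fin k, (∑ i ∈ Finset.univ.filter (fun i => g i = j), |x i|) ^ 2)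

lemma omegaExcl_sq {p k : ℕ} (g : Fin p → Fin k) (x : EuclideanSpace ℝ (Fin p)) :
    (OmegaExcl g x) ^ 2
      = ∑ j : Fin k, (∑ i ∈ Finset.univ.filter (fun i => g i = j), |x i|) ^ 2 := by
  rw [OmegaExcl, Real.sq_sqrt]
  positivity

/-- At a minimizer `xhat` of `L + (μ/2)Ω_excl²`, the gradient of `L` vanishes on every
group that does not intersect the support of `xhat`. -/
theorem grad_zero_on_inactive_groups {p k : ℕ} (g : Fin p → Fin k)
    (L : EuclideanSpace ℝ (Fin p) → ℝ)
    (L' : EuclideanSpace ℝ (Fin p) → EuclideanSpace ℝ (Fin p))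
    (hL : ∀ y, HasGradientAt L (L' y) y)
    (hconv : ConvexOn ℝ Set.univ L)
    (μ : ℝ) (hμ : 0 < μ) (xhat : EuclideanSpace ℝ (Fin p))
    (hmin : ∀ y, L xhat + μ / 2 * (OmegaExcl g xhat) ^ 2 ≤ L y + μ / 2 * (OmegaExcl g y) ^ 2) :
    ∀ j : Fin k, (∀ i, g i = j → xhat i = 0) → ∀ i, g i = j → L' xhat i = 0 := by
  intro j hj i hgi
  set v : EuclideanSpace ℝ (Fin p) := EuclideanSpace.single i (1 : ℝ) with hv
  have hvapp : ∀ i', v i' = if i' = i then (1 : ℝ) else 0 := by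
    intro i'
    simp [hv, EuclideanSpace.single_apply]
  have hyapp : ∀ (t : ℝ) (i' : Fin p),
      (xhat + t • v) i' = xhat i' + t * (if i' = i then (1 : ℝ) else 0) := by
    intro t i'
    simp [hvapp i']
  -- penalty identity
  have key : ∀ t : ℝ,
      (OmegaExcl g (xhat + t • v)) ^ 2 = (OmegaExcl g xhat) ^ 2 + t ^ 2 := by
    intro t
    rw [omegaExcl_sq, omegaExcl_sq]
    have hjy : (∑ i' ∈ Finset.univ.filter (fun i' => g i' = j), |(xhat + t • v) i'|) = |t| := by
      rw [Finset.sum_eq_single i]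
      · rw [hyapp]
        simp [hj i hgi]
      · intro b hb hbi
        rw [hyapp]
        simp only [Finset.mem_filter] at hb
        simp [hj b hb.2, hbi]
      · intro h
        exact absurd (Finset.mem_filter.2 ⟨Finset.mem_univ i, hgi⟩) h
    have hjx : (∑ i' ∈ Finset.univ.filter (fun i' => g i' = j), |xhat i'|) = 0 := by
      apply Finset.sum_eq_zero
      intro b hb
      simp only [Finset.mem_filter] at hb
      simp [hj b hb.2]
    rw [← Finset.sum_erase_add _ _ (Finset.mem_univ j),
        ← Finset.sum_erase_add _ _ (Finset.mem_univ j), hjy, hjx, sq_abs]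
    have : ∀ j' ∈ Finset.univ.erase j,
        (∑ i' ∈ Finset.univ.filter (fun i' => g i' = j'), |(xhat + t • v) i'|) ^ 2
        = (∑ i' ∈ Finset.univ.filter (fun i' => g i' = j'), |xhat i'|) ^ 2 := by
      intro j' hj'
      have hjj' : j' ≠ j := (Finset.mem_erase.1 hj').1
      congr 1
      apply Finset.sum_congr rfl
      intro b hb
      simp only [Finset.mem_filter] at hb
      have hbi : b ≠ i := fun h => hjj' (by rw [← hb.2, h, hgi])
      rw [hyapp]
      simp [hbi]
    rw [Finset.sum_congr rfl this]
    ring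
  -- the one-dimensional function
  set φ : ℝ → ℝ := fun t => L (xhat + t • v) + μ / 2 * t ^ 2 with hφdef
  have hmin' : ∀ t, φ 0 ≤ φ t := by
    intro t
    have := hmin (xhat + t • v)
    rw [key t] at this
    have h0 : φ 0 = L xhat := by simp [hφdef]
    rw [h0]
    simp only [hφdef]
    nlinarith
  have hlm : IsLocalMin φ 0 := Filter.Eventually.of_forall hmin'
  have hc : HasDerivAt (fun t : ℝ => xhat + t • v) v 0 := by
    simpa using ((hasDerivAt_id (0 : ℝ)).smul_const v).const_add xhat
  have hd1 : HasDerivAt (fun t : ℝ => L (xhat + t • v)) (L' xhat i) 0 := by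
    have := (by simpa using (hL xhat).hasFDerivAt :
      HasFDerivAt L ((InnerProductSpace.toDual ℝ (EuclideanSpace ℝ (Fin p))) (L' xhat))
        (xhat + (0:ℝ) • v)).comp_hasDerivAt 0 hc
    have hval : (InnerProductSpace.toDual ℝ (EuclideanSpace ℝ (Fin p)) (L' xhat)) v
        = L' xhat i := by
      simp [hv, InnerProductSpace.toDual_apply_apply, EuclideanSpace.inner_single_right]
    rw [hval] at this
    exact this
  have hd2 : HasDerivAt (fun t : ℝ => μ / 2 * t ^ 2) 0 0 := by
    have := ((hasDerivAt_pow 2 (0 : ℝ)).const_mul (μ / 2))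
    simpa using this
  have hφ : HasDerivAt φ (L' xhat i) 0 := by
    have := hd1.add hd2
    rw [add_zero] at this
    exact this
  exact hlm.hasDerivAt_eq_zero hφ
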